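/- Let x ∈ ℝⁿ with g(x) < ∞, let B be a symmetric positive semidefinite n×n matrix with ‖B‖ ≤ M, let α > 0, H = B + αI, ν ∈ [0,1), θ, γ ∈ (0,1). Define q(y) = f(x) + ⟨∇f(x), y − x⟩ + ½⟨y − x, H(y − x)⟩ + g(y). Suppose x̂ ∈ ℝⁿ satisfies q(x̂) ≤ q(x) and the residual e = x̂ − Prox_g(x̂ − ∇f(x) − H(x̂ − x)) satisfies ‖e‖ ≤ ν‖𝒢(x)‖. Set d = x̂ − x and let t > 0 satisfy t ≥ γ(1−θ)α/L₁ and F(x + td) ≤ F(x) − (θαt/2)‖d‖². Then F(x + td) − F(x) ≤ −(γθ(1−θ)/(2L₁)) · ((1−ν)α/(1+M+α))² · ‖𝒢(x)‖². -/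

import Mathlib

open scoped RealInnerProductSpace
open Metric Set Filter

noncomputable section

abbrev En (n : ℕ) : Type := EuclideanSpace ℝ (Fin n)

/-- Convex subdifferential of an extended-real-valued function `g` at `x`. -/
def ESubdiff {n : ℕ} (g : En n → EReal) (x : En n) : Set (En n) :=
  {v | ∀ y, g x + ((⟪v, y - x⟫ : ℝ) : EReal) ≤ g y}

/-- `g` is proper: it never takes the value `-∞` and is finite somewhere. -/
def ProperFun {n : ℕ} (g : En n → EReal) : Prop :=
  (∀ x, g x ≠ ⊥) ∧ ∃ x, g x ≠ ⊤

/-- Convexity for extended-real-valued functions. -/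
def EConvexOn {n : ℕ} (g : En n → EReal) : Prop :=
  ∀ x y : En n, ∀ a b : ℝ, 0 ≤ a → 0 ≤ b → a + b = 1 →
    g (a • x + b • y) ≤ (a : EReal) * g x + (b : EReal) * g y

/-- `p` minimizes `y ↦ g y + ‖y - u‖ ^ 2 / 2`. -/
def IsProxPt {n : ℕ} (g : En n → EReal) (u p : En n) : Prop :=
  ∀ y, g p + ((‖p - u‖ ^ 2 / 2 : ℝ) : EReal) ≤ g y + ((‖y - u‖ ^ 2 / 2 : ℝ) : EReal)

/-- `prox` maps each `u` to the unique minimizer of `y ↦ g y + ‖y - u‖ ^ 2 / 2`. -/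
def IsProxMap {n : ℕ} (g : En n → EReal) (prox : En n → En n) : Prop :=
  ∀ u, IsProxPt g u (prox u) ∧ ∀ p, IsProxPt g u p → p = prox u

/-- The solution set `𝒳* = argmin (f + g)`. -/
def ArgminSet {n : ℕ} (f : En n → ℝ) (g : En n → EReal) : Set (En n) :=
  {x | ∀ y, (f x : EReal) + g x ≤ (f y : EReal) + g y}

/-- The prox-gradient mapping `𝒢 x = x - Prox_g (x - ∇f x)`. -/
def Gmap {n : ℕ} (f' prox : En n → En n) (x : En n) : En n :=
  x - prox (x - f' x)

lemma norm_add_smul_sq {n : ℕ} (v w : En n) (t : ℝ) :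
    ‖v + t • w‖ ^ 2 = ‖v‖ ^ 2 + 2 * (t * ⟪v, w⟫) + t ^ 2 * ‖w‖ ^ 2 := by
  rw [norm_add_sq_real, real_inner_smul_right, norm_smul, mul_pow]
  simp only [Real.norm_eq_abs, sq_abs]

lemma prox_pt_ne_top {n : ℕ} {g : En n → EReal} (hg : ProperFun g) {u p : En n}
    (hp : IsProxPt g u p) : g p ≠ ⊤ := by
  obtain ⟨y, hy⟩ := hg.2
  intro h
  have := hp y
  rw [h] at this
  have hyb := hg.1 y
  have : (⊤ : EReal) ≤ g y + ((‖y - u‖ ^ 2 / 2 : ℝ) : EReal) := by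
    rw [EReal.top_add_coe] at this; exact this
  have hne : g y + ((‖y - u‖ ^ 2 / 2 : ℝ) : EReal) ≠ ⊤ := by
    lift g y to ℝ using ⟨hy, hyb⟩ with r
    exact_mod_cast EReal.coe_ne_top _
  exact hne (top_le_iff.mp this)

/-- Firm nonexpansiveness of proximal points. -/
lemma prox_firm {n : ℕ} {g : En n → EReal} (hg : ProperFun g) (hgc : EConvexOn g)
    {u₁ u₂ a b : En n} (h₁ : IsProxPt g u₁ a) (h₂ : IsProxPt g u₂ b) :
    ‖a - b‖ ^ 2 ≤ ⟪a - b, u₁ - u₂⟫ := by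
  obtain ⟨ga, hga⟩ : ∃ r : ℝ, g a = r := by
    lift g a to ℝ using ⟨prox_pt_ne_top hg h₁, hg.1 a⟩ with r; exact ⟨r, rfl⟩
  obtain ⟨gb, hgb⟩ : ∃ r : ℝ, g b = r := by
    lift g b to ℝ using ⟨prox_pt_ne_top hg h₂, hg.1 b⟩ with r; exact ⟨r, rfl⟩
  -- key inequality for each t ∈ (0,1]
  have key : ∀ t : ℝ, 0 < t → t ≤ 1 → (1 - t) * ‖a - b‖ ^ 2 ≤ ⟪a - b, u₁ - u₂⟫ := by
    intro t ht0 ht1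
    -- step at a
    have step : ∀ (p q : En n) (gp gq : ℝ) (u : En n), IsProxPt g u p → g p = gp → g q = gq →
        t * (gp - gq) ≤ t * ⟪p - u, q - p⟫ + t ^ 2 / 2 * ‖q - p‖ ^ 2 := by
      intro p q gp gq u hp hgp hgq
      have hconv := hgc p q (1 - t) t (by linarith) (le_of_lt ht0) (by ring)
      have hmin := hp ((1 - t) • p + t • q)
      have hpt : (1 - t) • p + t • q = p + t • (q - p) := by
        rw [smul_sub, sub_smul, one_smul]; abel
      have hEq : g p + ((‖p - u‖ ^ 2 / 2 : ℝ) : EReal) ≤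
          (((1 - t) * gp + t * gq + ‖p - u + t • (q - p)‖ ^ 2 / 2 : ℝ) : EReal) := by
        refine hmin.trans ?_
        have h2 : g ((1 - t) • p + t • q) ≤ (((1 - t) * gp + t * gq : ℝ) : EReal) := by
          refine hconv.trans ?_
          rw [hgp, hgq]
          norm_cast
        calc g ((1 - t) • p + t • q) + ((‖(1 - t) • p + t • q - u‖ ^ 2 / 2 : ℝ) : EReal)
            ≤ (((1 - t) * gp + t * gq : ℝ) : EReal) + ((‖(1 - t) • p + t • q - u‖ ^ 2 / 2 : ℝ) : EReal) :=
              add_le_add_left h2 _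
          _ = (((1 - t) * gp + t * gq + ‖p - u + t • (q - p)‖ ^ 2 / 2 : ℝ) : EReal) := by
              rw [hpt]
              rw [show p + t • (q - p) - u = p - u + t • (q - p) by abel]
              norm_cast
      rw [hgp] at hEq
      have hReal : gp + ‖p - u‖ ^ 2 / 2 ≤ (1 - t) * gp + t * gq + ‖p - u + t • (q - p)‖ ^ 2 / 2 := by
        exact_mod_cast hEq
      have hexp := norm_add_smul_sq (p - u) (q - p) t
      nlinarith [hexp]
    have ha := step a b ga gb u₁ h₁ hga hgb
    have hb := step b a gb ga u₂ h₂ hgb hga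
    have hinner : ⟪a - u₁, b - a⟫ + ⟪b - u₂, a - b⟫ =
        -‖a - b‖ ^ 2 + ⟪a - b, u₁ - u₂⟫ := by
      have h1 : ⟪a - u₁, b - a⟫ = ⟪a, b⟫ - ⟪a, a⟫ - ⟪u₁, b⟫ + ⟪u₁, a⟫ := by
        rw [inner_sub_left, inner_sub_right, inner_sub_right]; ring
      have h2 : ⟪b - u₂, a - b⟫ = ⟪b, a⟫ - ⟪b, b⟫ - ⟪u₂, a⟫ + ⟪u₂, b⟫ := by
        rw [inner_sub_left, inner_sub_right, inner_sub_right]; ring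
      have h3 : ⟪a - b, u₁ - u₂⟫ = ⟪a, u₁⟫ - ⟪a, u₂⟫ - ⟪b, u₁⟫ + ⟪b, u₂⟫ := by
        rw [inner_sub_left, inner_sub_right, inner_sub_right]; ring
      have h4 : ‖a - b‖ ^ 2 = ⟪a, a⟫ - 2 * ⟪a, b⟫ + ⟪b, b⟫ := by
        rw [← real_inner_self_eq_norm_sq, inner_sub_left, inner_sub_right, inner_sub_right,
          real_inner_comm b a]; ring
      rw [h1, h2, h3, h4, real_inner_comm b a, real_inner_comm u₁ b, real_inner_comm u₁ a,
        real_inner_comm u₂ a, real_inner_comm u₂ b]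
      ring
    have hnn : ‖a - b‖ ^ 2 = ‖b - a‖ ^ 2 := by rw [norm_sub_rev]
    nlinarith [ha, hb, hinner]
  rcases eq_or_lt_of_le (sq_nonneg ‖a - b‖) with h0 | hpos
  · have h1 := key 1 one_pos le_rfl
    rw [sub_self, zero_mul] at h1
    linarith [h0.symm.le.trans h1]
  · refine le_of_forall_pos_le_add fun ε hε => ?_
    set s := ‖a - b‖ ^ 2 with hs
    have hts : 0 < min 1 (ε / s) := lt_min one_pos (div_pos hε hpos)
    have := key (min 1 (ε / s)) hts (min_le_left _ _)
    have h2 : min 1 (ε / s) * s ≤ ε := by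
      calc min 1 (ε / s) * s ≤ (ε / s) * s := by
            apply mul_le_mul_of_nonneg_right (min_le_right _ _) (le_of_lt hpos)
        _ = ε := by field_simp
    nlinarith

lemma key_w_bound {n : ℕ} (w dv Bd : En n) (M α : ℝ) (hM0 : 0 ≤ M) (hα : 0 < α)
    (hdB : 0 ≤ ⟪dv, Bd⟫) (hBn : ‖Bd‖ ≤ M * ‖dv‖)
    (hfirm : ‖w + dv‖ ^ 2 ≤ -⟪w + dv, Bd + α • dv - dv⟫) :
    ‖w‖ ≤ (1 + M + α) * ‖dv‖ := by
  have hexp : ⟪w + dv, Bd + α • dv - dv⟫ =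
      ⟪w, Bd⟫ + ⟪dv, Bd⟫ + α * ⟪w, dv⟫ + α * ‖dv‖ ^ 2 - ⟪w, dv⟫ - ‖dv‖ ^ 2 := by
    rw [inner_add_left, inner_sub_right, inner_sub_right, inner_add_right, inner_add_right,
      real_inner_smul_right, real_inner_smul_right, real_inner_self_eq_norm_sq]
    ring
  have hnwd : ‖w + dv‖ ^ 2 = ‖w‖ ^ 2 + 2 * ⟪w, dv⟫ + ‖dv‖ ^ 2 := norm_add_sq_real w dv
  have hwB : |⟪w, Bd⟫| ≤ ‖w‖ * (M * ‖dv‖) :=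
    (abs_real_inner_le_norm _ _).trans (mul_le_mul_of_nonneg_left hBn (norm_nonneg _))
  have hwd : |⟪w, dv⟫| ≤ ‖w‖ * ‖dv‖ := abs_real_inner_le_norm w dv
  rcases eq_or_lt_of_le (norm_nonneg w) with h0 | hpos
  · nlinarith [norm_nonneg dv]
  · have ha1 := abs_le.mp hwB
    have ha2 := abs_le.mp hwd
    have hineq : ‖w‖ ^ 2 ≤ (1 + M + α) * ‖dv‖ * ‖w‖ := by
      nlinarith [hfirm, hexp, hnwd, hα.le]
    nlinarith


set_option maxHeartbeats 1000000 in
theorem cost_decrease_estimate {n : ℕ}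
    (f : En n → ℝ) (f' : En n → En n) (g : En n → EReal) (prox : En n → En n)
    (L₁ : ℝ) (hL₁ : 0 < L₁)
    (hfconv : ConvexOn ℝ Set.univ f)
    (hgrad : ∀ x, HasGradientAt f (f' x) x)
    (hgradcont : Continuous f')
    (hlip : ∀ x y : En n, ‖f' x - f' y‖ ≤ L₁ * ‖x - y‖)
    (hgproper : ProperFun g) (hglsc : LowerSemicontinuous g) (hgconv : EConvexOn g)
    (hprox : IsProxMap g prox)
    (x : En n) (hgx : g x ≠ ⊤)
    (B : En n →L[ℝ] En n)
    (hBsymm : ∀ u v : En n, ⟪B u, v⟫ = ⟪u, B v⟫)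
    (hBpsd : ∀ u : En n, 0 ≤ ⟪B u, u⟫)
    (M : ℝ) (hBM : ‖B‖ ≤ M)
    (α : ℝ) (hα : 0 < α)
    (ν : ℝ) (hν0 : 0 ≤ ν) (hν1 : ν < 1)
    (θ γ : ℝ) (hθ0 : 0 < θ) (hθ1 : θ < 1) (hγ0 : 0 < γ) (hγ1 : γ < 1)
    (xhat : En n)
    (hq : ((f x + ⟪f' x, xhat - x⟫ +
        (⟪xhat - x, B (xhat - x)⟫ + α * ‖xhat - x‖ ^ 2) / 2 : ℝ) : EReal) + g xhat ≤
      (f x : EReal) + g x)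
    (hres : ‖xhat - prox (xhat - f' x - (B (xhat - x) + α • (xhat - x)))‖ ≤
      ν * ‖Gmap f' prox x‖)
    (t : ℝ) (ht0 : 0 < t) (htlow : γ * (1 - θ) * α / L₁ ≤ t)
    (htdec : (f (x + t • (xhat - x)) : EReal) + g (x + t • (xhat - x)) ≤
      ((f x : EReal) + g x) - ((θ * α * t / 2 * ‖xhat - x‖ ^ 2 : ℝ) : EReal)) :
    (f (x + t • (xhat - x)) : EReal) + g (x + t • (xhat - x)) ≤
      ((f x : EReal) + g x) -
        ((γ * θ * (1 - θ) / (2 * L₁) * ((1 - ν) * α / (1 + M + α)) ^ 2 *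
          ‖Gmap f' prox x‖ ^ 2 : ℝ) : EReal) := by
  obtain ⟨z, hz⟩ : ∃ z, z = prox (x - f' x) := ⟨_, rfl⟩
  obtain ⟨p, hp⟩ : ∃ p, p = prox (xhat - f' x - (B (xhat - x) + α • (xhat - x))) := ⟨_, rfl⟩
  obtain ⟨Bd, hBd⟩ : ∃ v, v = B (xhat - x) := ⟨_, rfl⟩
  have hM0 : 0 ≤ M := le_trans (norm_nonneg _) hBM
  have hS : (0:ℝ) < 1 + M + α := by linarith
  have hG : Gmap f' prox x = x - z := by rw [Gmap, hz]
  rw [hG] at hres ⊢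
  rw [← hp] at hres
  have hfirm : ‖z - p‖ ^ 2 ≤ ⟪z - p, (x - f' x) - (xhat - f' x - (Bd + α • (xhat - x)))⟫ := by
    rw [hz, hp, hBd]
    exact prox_firm hgproper hgconv (hprox _).1 (hprox _).1
  obtain ⟨w, hw⟩ : ∃ w, w = (x - z) - (xhat - p) := ⟨_, rfl⟩
  have hzp : z - p = -(w + (xhat - x)) := by rw [hw]; abel
  have hu : (x - f' x) - (xhat - f' x - (Bd + α • (xhat - x))) =
      Bd + α • (xhat - x) - (xhat - x) := by abel
  rw [hzp, hu, norm_neg, inner_neg_left] at hfirm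
  have hdB : 0 ≤ ⟪xhat - x, Bd⟫ := by
    rw [hBd, real_inner_comm]; exact hBpsd _
  have hBn : ‖Bd‖ ≤ M * ‖xhat - x‖ := by
    rw [hBd]
    exact le_trans (B.le_opNorm _) (mul_le_mul_of_nonneg_right hBM (norm_nonneg _))
  have hkeyw : ‖w‖ ≤ (1 + M + α) * ‖xhat - x‖ :=
    key_w_bound w (xhat - x) Bd M α hM0 hα hdB hBn hfirm
  have hGwe : ‖x - z‖ ≤ ‖w‖ + ‖xhat - p‖ := by
    have hxz : x - z = w + (xhat - p) := by rw [hw]; abel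
    rw [hxz]; exact norm_add_le _ _
  have hkey : (1 - ν) * ‖x - z‖ ≤ (1 + M + α) * ‖xhat - x‖ := by nlinarith
  have hA : 0 ≤ (1 - ν) * α / (1 + M + α) * ‖x - z‖ := by
    have h1 : (0:ℝ) ≤ (1 - ν) * α / (1 + M + α) := by
      apply div_nonneg (mul_nonneg (by linarith) hα.le) hS.le
    exact mul_nonneg h1 (norm_nonneg _)
  have hB2 : (1 - ν) * α / (1 + M + α) * ‖x - z‖ ≤ α * ‖xhat - x‖ := by
    rw [div_mul_eq_mul_div, div_le_iff₀ hS]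
    nlinarith [hkey, hα.le]
  have hsq : ((1 - ν) * α / (1 + M + α)) ^ 2 * ‖x - z‖ ^ 2 ≤ α ^ 2 * ‖xhat - x‖ ^ 2 := by
    calc ((1 - ν) * α / (1 + M + α)) ^ 2 * ‖x - z‖ ^ 2
        = ((1 - ν) * α / (1 + M + α) * ‖x - z‖) * ((1 - ν) * α / (1 + M + α) * ‖x - z‖) := by
          ring
      _ ≤ (α * ‖xhat - x‖) * (α * ‖xhat - x‖) := mul_self_le_mul_self hA hB2
      _ = α ^ 2 * ‖xhat - x‖ ^ 2 := by ring
  have hcoef : (0:ℝ) ≤ γ * θ * (1 - θ) / (2 * L₁) := by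
    apply div_nonneg _ (by linarith)
    exact mul_nonneg (mul_nonneg hγ0.le hθ0.le) (by linarith)
  have hc : γ * θ * (1 - θ) / (2 * L₁) * ((1 - ν) * α / (1 + M + α)) ^ 2 * ‖x - z‖ ^ 2 ≤
      θ * α * t / 2 * ‖xhat - x‖ ^ 2 := by
    have h1 : γ * θ * (1 - θ) / (2 * L₁) * ((1 - ν) * α / (1 + M + α)) ^ 2 * ‖x - z‖ ^ 2 ≤
        γ * θ * (1 - θ) / (2 * L₁) * (α ^ 2 * ‖xhat - x‖ ^ 2) := by
      rw [mul_assoc]; exact mul_le_mul_of_nonneg_left hsq hcoef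
    have h2 : γ * θ * (1 - θ) / (2 * L₁) * (α ^ 2 * ‖xhat - x‖ ^ 2) =
        θ * α / 2 * (γ * (1 - θ) * α / L₁) * ‖xhat - x‖ ^ 2 := by ring
    have h3 : θ * α / 2 * (γ * (1 - θ) * α / L₁) * ‖xhat - x‖ ^ 2 ≤
        θ * α * t / 2 * ‖xhat - x‖ ^ 2 := by
      have h4 : θ * α / 2 * (γ * (1 - θ) * α / L₁) ≤ θ * α * t / 2 := by
        have hpos : (0:ℝ) ≤ θ * α / 2 := by positivity
        calc θ * α / 2 * (γ * (1 - θ) * α / L₁) ≤ θ * α / 2 * t :=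
              mul_le_mul_of_nonneg_left htlow hpos
          _ = θ * α * t / 2 := by ring
      exact mul_le_mul_of_nonneg_right h4 (sq_nonneg _)
    linarith
  exact htdec.trans (EReal.sub_le_sub le_rfl (EReal.coe_le_coe_iff.2 hc))
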